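/- The second-order coefficient in the expansion 1/ρ = Σ_{n≥0} S_n/Δ^{2n+1} (with σ of order ε², χ of order ε, Δ² = 1+3cos²φ) is S₂ = −(7/2)σ sin φ − (3/2)σ sin 3φ + 7χ² + 9χ² cos 2φ; equivalently, the order-ε² part of the Taylor expansion of (Δ² + 4σ sin φ + 8χ cos φ + 4σ² + 4χ²)^{−1/2} equals S₂/Δ⁵ with this S₂. -/

import Mathlib

open Real Filter

theorem second_order_coefficient_S2 (φ σ χ : ℝ) (Δ : ℝ)
    (hΔ : Δ = Real.sqrt (1 + 3 * Real.cos φ ^ 2)) :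
    iteratedDeriv 2
      (fun ε : ℝ => 1 / Real.sqrt (Δ^2 + 4 * (ε^2 * σ) * Real.sin φ
          + 8 * (ε * χ) * Real.cos φ + 4 * (ε^2 * σ)^2 + 4 * (ε * χ)^2))
      0 / 2
      = (-(7/2) * σ * Real.sin φ - (3/2) * σ * Real.sin (3 * φ)
          + 7 * χ^2 + 9 * χ^2 * Real.cos (2 * φ)) / Δ^5 := by
  have h1 : (0:ℝ) < 1 + 3 * Real.cos φ ^ 2 := by positivity
  have hΔpos : 0 < Δ := by rw [hΔ]; exact Real.sqrt_pos.mpr h1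
  have hΔsq : Δ ^ 2 = 1 + 3 * Real.cos φ ^ 2 := by
    rw [hΔ, Real.sq_sqrt h1.le]
  have key : ∀ a s : ℝ, s ≠ 0 → -(a / (2*s)) / s^2 = -a / (2*s^3) := by
    intro a s hs; field_simp
  set P : ℝ → ℝ := fun ε => Δ^2 + (8*χ*Real.cos φ)*ε + (4*σ*Real.sin φ + 4*χ^2)*ε^2
      + (4*σ^2)*ε^4 with hPdef
  set P' : ℝ → ℝ := fun ε => 8*χ*Real.cos φ + (4*σ*Real.sin φ + 4*χ^2)*(2*ε)
      + (4*σ^2)*(4*ε^3) with hP'def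
  have hfeq : ∀ ε : ℝ, Δ^2 + 4 * (ε^2 * σ) * Real.sin φ
      + 8 * (ε * χ) * Real.cos φ + 4 * (ε^2 * σ)^2 + 4 * (ε * χ)^2 = P ε := by
    intro ε; simp only [hPdef]; ring
  simp only [hfeq]
  have hPc : Continuous P := by rw [hPdef]; fun_prop
  have hP0 : P 0 = Δ ^ 2 := by simp [hPdef]
  have hP0pos : 0 < P 0 := by rw [hP0]; positivity
  have hev : ∀ᶠ ε in nhds (0:ℝ), 0 < P ε :=
    hPc.continuousAt.eventually (eventually_gt_nhds hP0pos)
  have hP' : ∀ ε : ℝ, HasDerivAt P (P' ε) ε := by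
    intro ε
    have h2 : HasDerivAt (fun x : ℝ => x^2) (2*ε) ε := by simpa using hasDerivAt_pow 2 ε
    have h4 : HasDerivAt (fun x : ℝ => x^4) (4*ε^3) ε := by simpa using hasDerivAt_pow 4 ε
    have h := (((hasDerivAt_const ε (Δ^2)).add ((hasDerivAt_id' (x := ε)).const_mul
        (8*χ*Real.cos φ))).add (h2.const_mul (4*σ*Real.sin φ + 4*χ^2))).add
        (h4.const_mul (4*σ^2))
    convert h using 1
    · rfl
    · rfl
    · rfl
    simp only [hP'def]; ring
  set f₁ : ℝ → ℝ := fun ε => -(P' ε) / (2 * Real.sqrt (P ε) ^ 3) with hf₁def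
  have hderiv1 : ∀ ε : ℝ, 0 < P ε → deriv (fun x => 1 / Real.sqrt (P x)) ε = f₁ ε := by
    intro ε hε
    have hs : Real.sqrt (P ε) ≠ 0 := (Real.sqrt_pos.mpr hε).ne'
    have hsq := (hP' ε).sqrt hε.ne'
    have hinv := hsq.inv hs
    have hdd : deriv (fun x => (Real.sqrt (P x))⁻¹) ε
        = -(P' ε / (2 * Real.sqrt (P ε))) / Real.sqrt (P ε) ^ 2 := hinv.deriv
    simp only [one_div]
    rw [hdd, key _ _ hs]
  have hEq : deriv (fun x => 1 / Real.sqrt (P x)) =ᶠ[nhds (0:ℝ)] f₁ :=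
    hev.mono fun ε hε => hderiv1 ε hε
  rw [iteratedDeriv_succ, iteratedDeriv_one, hEq.deriv_eq]
  -- derivative of P' at 0
  have hP'' : HasDerivAt P' (8*σ*Real.sin φ + 8*χ^2) 0 := by
    have h3 : HasDerivAt (fun x : ℝ => x^3) ((3:ℝ) * 0 ^ 2) 0 := by
      simpa using hasDerivAt_pow 3 (0:ℝ)
    have h := ((hasDerivAt_const (0:ℝ) (8*χ*Real.cos φ)).add
        (((hasDerivAt_id' (x := (0:ℝ))).const_mul (2:ℝ)).const_mul
          (4*σ*Real.sin φ + 4*χ^2))).add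
        ((h3.const_mul (4:ℝ)).const_mul (4*σ^2))
    convert h using 1
    · rfl
    · rfl
    · rfl
    ring
  have hs0 : Real.sqrt (P 0) = Δ := by rw [hP0, Real.sqrt_sq hΔpos.le]
  have hsqrt0 := (hP' 0).sqrt hP0pos.ne'
  have hnum : HasDerivAt (fun ε => -(P' ε)) (-(8*σ*Real.sin φ + 8*χ^2)) 0 := hP''.neg
  have hden : HasDerivAt (fun ε => 2 * Real.sqrt (P ε) ^ 3)
      (2 * ((3:ℝ) * Real.sqrt (P 0) ^ 2 * (P' 0 / (2 * Real.sqrt (P 0))))) 0 := by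
    simpa using ((hsqrt0.pow 3).const_mul 2)
  have hden0 : 2 * Real.sqrt (P 0) ^ 3 ≠ 0 := by
    rw [hs0]; positivity
  have hdiv := hnum.div hden hden0
  have hd : deriv f₁ 0 = (-(8*σ*Real.sin φ + 8*χ^2) * (2 * Real.sqrt (P 0) ^ 3)
      - -(P' 0) * (2 * ((3:ℝ) * Real.sqrt (P 0) ^ 2 * (P' 0 / (2 * Real.sqrt (P 0))))))
      / (2 * Real.sqrt (P 0) ^ 3) ^ 2 := hdiv.deriv
  have hP'0 : P' 0 = 8*χ*Real.cos φ := by simp [hP'def]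
  rw [hd, hs0, hP'0]
  have h3φ : Real.sin (3*φ) = 3 * Real.sin φ - 4 * Real.sin φ ^ 3 := Real.sin_three_mul φ
  have h2φ : Real.cos (2*φ) = 2 * Real.cos φ ^ 2 - 1 := Real.cos_two_mul φ
  rw [h3φ, h2φ]
  have hΔne : Δ ≠ 0 := hΔpos.ne'
  have hpy : Real.sin φ ^ 2 + Real.cos φ ^ 2 = 1 := Real.sin_sq_add_cos_sq φ
  field_simp
  linear_combination (-16*(σ*Real.sin φ + χ^2)) * hΔsq
    + (-(48*σ*Real.sin φ)) * hpy
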